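/- For a positive integer a and M = {(x,y) ∈ ℕ² : (2a+1) divides ax + y}, the set of elements of M in the box [0, 2a+1)² equals {(2i, i) : 0 ≤ i ≤ a−1} ∪ {(2i+1, a+i+1) : 0 ≤ i ≤ a−1} ∪ {(2a, a)}. -/
import Mathlib


/-- For a positive integer `a` and `M = {(x,y) ∈ ℕ² : (2a+1) ∣ ax + y}`, the
set of elements of `M` in the box `[0, 2a+1)²` is
`{(2i, i) : 0 ≤ i ≤ a−1} ∪ {(2i+1, a+i+1) : 0 ≤ i ≤ a−1} ∪ {(2a, a)}`. -/
theorem stmt_12 (a : ℕ) (ha : 0 < a)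
    (M : Set (ℕ × ℕ)) (hM : M = {p | (2 * a + 1) ∣ a * p.1 + p.2}) :
    {m | m ∈ M ∧ m.1 < 2 * a + 1 ∧ m.2 < 2 * a + 1}
      = ((fun i : ℕ => (2 * i, i)) '' {i | i ≤ a - 1})
        ∪ ((fun i : ℕ => (2 * i + 1, a + i + 1)) '' {i | i ≤ a - 1})
        ∪ {(2 * a, a)} := by
  subst hM
  ext ⟨x, y⟩
  simp only [Set.mem_setOf_eq, Set.mem_union, Set.mem_image, Set.mem_singleton_iff,
    Prod.mk.injEq]
  constructor
  · rintro ⟨⟨k, hk⟩, hx, hy⟩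
    rcases Nat.even_or_odd x with ⟨i, hi⟩ | ⟨i, hi⟩
    · -- x = 2i, i ≤ a
      have hia : i ≤ a := by omega
      have h1 : ((i : ℤ) - k) * (2 * a + 1) = (i : ℤ) - y := by
        have hk' : (a : ℤ) * x + y = (2 * a + 1) * k := by exact_mod_cast hk
        have hx' : (x : ℤ) = i + i := by exact_mod_cast hi
        nlinarith [hk', hx']
      have hdvd : ((2 : ℤ) * a + 1) ∣ (i : ℤ) - y := ⟨(i : ℤ) - k, by linarith [h1]⟩
      have habs : |(i : ℤ) - y| < 2 * a + 1 := by
        rw [abs_lt]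
        constructor <;> [push_cast; push_cast] <;> omega
      have hyi : (i : ℤ) - y = 0 := Int.eq_zero_of_abs_lt_dvd hdvd habs
      have hyi' : y = i := by omega
      rcases eq_or_lt_of_le hia with h | h
      · right; omega
      · left; left; exact ⟨i, by omega, by omega⟩
    · -- x = 2i+1, i ≤ a - 1
      have hia : i < a := by omega
      have h1 : ((i : ℤ) - k) * (2 * a + 1) = (i : ℤ) - a - y := by
        have hk' : (a : ℤ) * x + y = (2 * a + 1) * k := by exact_mod_cast hk
        have hx' : (x : ℤ) = 2 * i + 1 := by exact_mod_cast hi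
        nlinarith [hk', hx']
      have hb1 : (i : ℤ) - a - y ≤ -1 := by push_cast; omega
      have hb2 : -(3 * a : ℤ) ≤ (i : ℤ) - a - y := by push_cast; omega
      have hd1 : (i : ℤ) - k ≤ -1 := by nlinarith
      have hd2 : -1 ≤ (i : ℤ) - k := by nlinarith
      have hd : (i : ℤ) - k = -1 := le_antisymm hd1 hd2
      have hy' : (y : ℤ) = a + i + 1 := by
        rw [hd] at h1; linarith
      left; right
      exact ⟨i, by omega, by omega, by exact_mod_cast hy'.symm⟩
  · rintro ((⟨i, hi, rfl, rfl⟩ | ⟨i, hi, rfl, rfl⟩) | ⟨h1, h2⟩)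
    · exact ⟨⟨i, by ring⟩, by omega, by omega⟩
    · exact ⟨⟨i + 1, by ring⟩, by omega, by omega⟩
    · exact ⟨⟨a, by rw [h1, h2]; ring⟩, by omega, by omega⟩
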